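/- arXiv:1705.08300 — 2 statements merged into one kernel-verified Lean document; each statement's English description precedes it below -/
import Mathlib

section
/- Let W be a real separable Banach space and let μ be a centered Gaussian measure on W. Let h ∈ W be such that sup{ ℓ(h) : ℓ ∈ W*, Cov_μ(ℓ,ℓ) ≤ 1 } = ∞ (i.e. h does not lie in the Cameron–Martin space H_μ). Then the pushforward of μ under the translation map T_h : x ↦ x + h and the measure μ are mutually singular. -/
open MeasureTheory ProbabilityTheory NNReal

/-- A Borel probability measure on a real Banach space is a *centered Gaussian measure*
if the pushforward under every continuous linear functional is a (possibly degenerate)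
centered real Gaussian measure. -/
def IsCenteredGaussian {W : Type*} [NormedAddCommGroup W] [NormedSpace ℝ W]
    [MeasurableSpace W] (μ : Measure W) : Prop :=
  ∀ ℓ : W →L[ℝ] ℝ, ∃ v : ℝ≥0, μ.map ℓ = gaussianReal 0 v

open Filter Real in
lemma integrable_mul_self_gaussianReal' (v : ℝ≥0) :
    Integrable (fun x : ℝ => x * x) (gaussianReal 0 v) := by
  by_cases hv : v = 0
  · subst hv
    rw [gaussianReal_zero_var]
    constructor
    · exact (measurable_id.mul measurable_id).aestronglyMeasurable
    · simp [HasFiniteIntegral, lintegral_dirac]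
  · rw [gaussianReal_of_var_ne_zero _ hv,
      integrable_withDensity_iff (measurable_gaussianPDF _ _)
        (ae_of_all _ fun x => ENNReal.ofReal_lt_top)]
    have hvpos : (0:ℝ) < (v:ℝ) := by positivity
    have hb : (0:ℝ) < (2 * (v:ℝ))⁻¹ := by positivity
    have h1 := (integrable_rpow_mul_exp_neg_mul_sq hb (s := 2) (by norm_num)).const_mul
      ((Real.sqrt (2 * π * v))⁻¹)
    refine h1.congr (ae_of_all _ fun x => ?_)
    simp only [gaussianPDF_def]
    rw [ENNReal.toReal_ofReal (gaussianPDFReal_nonneg 0 v x), gaussianPDFReal, Real.rpow_two]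
    have hx : -(x - 0)^2 / (2 * (v:ℝ)) = -(2 * (v:ℝ))⁻¹ * x ^ 2 := by field_simp; ring
    rw [hx]; ring

open Filter Real in
/-- If `h` has infinite Cameron–Martin norm (i.e. does not lie in the Cameron–Martin space
`H_μ`), then the translate of `μ` by `h` and `μ` are mutually singular. -/
theorem cameronMartin_translate_mutuallySingular
    {W : Type*} [NormedAddCommGroup W] [NormedSpace ℝ W] [CompleteSpace W]
    [TopologicalSpace.SeparableSpace W] [MeasurableSpace W] [BorelSpace W]
    (μ : Measure W) [IsProbabilityMeasure μ] (hμ : IsCenteredGaussian μ)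
    (h : W)
    (hh : ¬ BddAbove {r : ℝ | ∃ ℓ : W →L[ℝ] ℝ, (∫ x, ℓ x * ℓ x ∂μ) ≤ 1 ∧ ℓ h = r}) :
    Measure.MutuallySingular (μ.map (fun x => x + h)) μ := by
  classical
  have hsel : ∀ n : ℕ, ∃ ℓ : W →L[ℝ] ℝ, (∫ x, ℓ x * ℓ x ∂μ) ≤ 1 ∧ (2:ℝ)^n < ℓ h / 2 := by
    intro n
    obtain ⟨r, ⟨ℓ, hint, hr⟩, hlt⟩ := (not_bddAbove_iff.1 hh) ((2:ℝ)^(n+1))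
    refine ⟨ℓ, hint, ?_⟩
    rw [← hr, pow_succ] at hlt
    linarith
  choose ℓ hint hgt using hsel
  set t : ℕ → ℝ := fun n => ℓ n h / 2 with ht
  have hgt' : ∀ n, (2:ℝ)^n < t n := fun n => hgt n
  have htpos : ∀ n, 0 < t n := fun n => lt_trans (by positivity) (hgt' n)
  have hInt : ∀ n, Integrable (fun x => ℓ n x * ℓ n x) μ := by
    intro n
    obtain ⟨v, hv⟩ := hμ (ℓ n)
    have h1 : Integrable (fun y : ℝ => y * y) (μ.map (ℓ n)) :=
      hv ▸ integrable_mul_self_gaussianReal' v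
    exact (integrable_map_measure ((measurable_id.mul measurable_id).aestronglyMeasurable)
      ((ℓ n).continuous.measurable.aemeasurable)).mp h1
  -- Chebyshev bound
  have key : ∀ n, μ {x | (t n)^2 ≤ ℓ n x * ℓ n x} ≤ ENNReal.ofReal ((4:ℝ)⁻¹^n) := by
    intro n
    have hm := mul_meas_ge_le_integral_of_nonneg
      (ae_of_all μ fun x => mul_self_nonneg (ℓ n x)) (hInt n) ((t n)^2)
    have hm1 : (t n)^2 * (μ {x | (t n)^2 ≤ ℓ n x * ℓ n x}).toReal ≤ 1 := hm.trans (hint n)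
    have hX : (0:ℝ) ≤ (μ {x | (t n)^2 ≤ ℓ n x * ℓ n x}).toReal := ENNReal.toReal_nonneg
    have h2n : ((2:ℝ)^n)^2 = 4^n := by
      rw [← pow_mul, mul_comm, pow_mul]; norm_num
    have h4 : (0:ℝ) < 4^n := by positivity
    have hr : (μ {x | (t n)^2 ≤ ℓ n x * ℓ n x}).toReal ≤ (4:ℝ)⁻¹^n := by
      have h5 : (4:ℝ)^n ≤ (t n)^2 := by nlinarith [hgt' n, h2n, sq_nonneg (t n - 2^n), pow_pos (show (0:ℝ)<2 by norm_num) n]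
      rw [inv_pow, ← one_div, le_div_iff₀ h4]
      nlinarith [mul_le_mul_of_nonneg_right h5 hX, hm1]
    calc μ {x | (t n)^2 ≤ ℓ n x * ℓ n x}
        = ENNReal.ofReal (μ {x | (t n)^2 ≤ ℓ n x * ℓ n x}).toReal :=
          (ENNReal.ofReal_toReal (measure_ne_top μ _)).symm
      _ ≤ _ := ENNReal.ofReal_le_ofReal hr
  -- the bad sets
  set s : ℕ → Set W := fun n => {x | ℓ n x ≤ t n} with hsdef
  have hsm : ∀ n, MeasurableSet (s n) :=
    fun n => measurableSet_le (ℓ n).continuous.measurable measurable_const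
  have hν : ∀ n, (μ.map (fun x => x + h)) (s n) ≤ ENNReal.ofReal ((4:ℝ)⁻¹^n) := by
    intro n
    rw [Measure.map_apply (measurable_add_const h) (hsm n)]
    refine le_trans (measure_mono ?_) (key n)
    intro x hx
    simp only [Set.mem_preimage, hsdef, Set.mem_setOf_eq] at hx ⊢
    have hmap : ℓ n (x + h) = ℓ n x + ℓ n h := (ℓ n).map_add x h
    have hth : ℓ n h = 2 * t n := by rw [ht]; ring
    have hx' : ℓ n x ≤ - t n := by rw [hmap, hth] at hx; linarith
    nlinarith [htpos n, sq_nonneg (ℓ n x + t n)]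
  have hμc : ∀ n, μ (s n)ᶜ ≤ ENNReal.ofReal ((4:ℝ)⁻¹^n) := by
    intro n
    refine le_trans (measure_mono ?_) (key n)
    intro x hx
    simp only [Set.mem_compl_iff, hsdef, Set.mem_setOf_eq, not_le] at hx
    simp only [Set.mem_setOf_eq]
    nlinarith [htpos n, sq_nonneg (ℓ n x - t n)]
  have hsum : (∑' n, ENNReal.ofReal ((4:ℝ)⁻¹^n)) ≠ ⊤ := by
    rw [← ENNReal.ofReal_tsum_of_nonneg (fun n => by positivity)
      (summable_geometric_of_lt_one (by norm_num) (by norm_num))]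
    exact ENNReal.ofReal_ne_top
  have hν0 : (μ.map (fun x => x + h)) (limsup s atTop) = 0 :=
    measure_limsup_atTop_eq_zero (ne_top_of_le_ne_top hsum (ENNReal.tsum_le_tsum hν))
  have hμ0 : μ (limsup (fun n => (s n)ᶜ) atTop) = 0 :=
    measure_limsup_atTop_eq_zero (ne_top_of_le_ne_top hsum (ENNReal.tsum_le_tsum hμc))
  refine ⟨limsup s atTop, MeasurableSet.measurableSet_limsup hsm, hν0, ?_⟩
  refine measure_mono_null ?_ hμ0
  intro x hx
  rw [Set.mem_compl_iff, mem_limsup_iff_frequently_mem, not_frequently] at hx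
  rw [mem_limsup_iff_frequently_mem]
  exact (hx.mono fun n hn => hn).frequently
end

section
/- Let γ be the Gaussian measure N(0,σ²) on ℝ with σ > 0, let a > 0, and let T_a : ℝ → ℝ be the translation x ↦ x + a. Then the lattice infimum of γ and T_a#γ has total mass (γ ⊓ (T_a#γ))(ℝ) = 2·γ₁([a/(2σ), ∞)), where γ₁ is the standard Gaussian measure N(0,1) on ℝ; equivalently, the total variation distance between N(0,σ²) and N(a,σ²) equals 1 − 2·γ₁([a/(2σ), ∞)). -/
open MeasureTheory ProbabilityTheory NNReal

open scoped ENNReal Real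

lemma inf_withDensity_apply' {α : Type*} {mα : MeasurableSpace α} (μ : Measure α) [SFinite μ]
    {f g : α → ℝ≥0∞} (hf : Measurable f) (hg : Measurable g) {s : Set α}
    (hs : MeasurableSet s) :
    (μ.withDensity f ⊓ μ.withDensity g) s = ∫⁻ x in s, min (f x) (g x) ∂μ := by
  rw [Measure.inf_apply hs]
  apply le_antisymm
  · set t : Set α := {x | f x ≤ g x} with ht
    have htm : MeasurableSet t := measurableSet_le hf hg
    have key : μ.withDensity f (t ∩ s) + μ.withDensity g (tᶜ ∩ s)
        = ∫⁻ x in s, min (f x) (g x) ∂μ := by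
      rw [withDensity_apply _ (htm.inter hs), withDensity_apply _ (htm.compl.inter hs),
        ← lintegral_add_compl (fun x => min (f x) (g x)) htm (μ := μ.restrict s),
        Measure.restrict_restrict htm, Measure.restrict_restrict htm.compl]
      congr 1
      · exact setLIntegral_congr_fun (htm.inter hs)
          (fun x hx => (min_eq_left hx.1).symm)
      · exact setLIntegral_congr_fun (htm.compl.inter hs)
          (fun x hx => (min_eq_right (le_of_lt (by simpa [t] using hx.1))).symm)
    exact key ▸ sInf_le ⟨t, rfl⟩
  · apply le_sInf
    rintro m ⟨t, rfl⟩
    calc ∫⁻ x in s, min (f x) (g x) ∂μ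
        = μ.withDensity (fun x => min (f x) (g x)) s := (withDensity_apply' _ s).symm
      _ ≤ μ.withDensity (fun x => min (f x) (g x)) (t ∩ s)
          + μ.withDensity (fun x => min (f x) (g x)) (tᶜ ∩ s) := by
          conv_lhs => rw [show s = (t ∩ s) ∪ (tᶜ ∩ s) by
            rw [Set.inter_comm, Set.inter_comm tᶜ, Set.inter_union_compl]]
          exact measure_union_le _ _
      _ ≤ μ.withDensity f (t ∩ s) + μ.withDensity g (tᶜ ∩ s) := by
          gcongr ?_ + ?_
          · rw [withDensity_apply' _ (t ∩ s), withDensity_apply' _ (t ∩ s)]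
            exact lintegral_mono fun x => min_le_left _ _
          · rw [withDensity_apply' _ (tᶜ ∩ s), withDensity_apply' _ (tᶜ ∩ s)]
            exact lintegral_mono fun x => min_le_right _ _

lemma gaussianPDF_le_gaussianPDF {m m' : ℝ} {v : ℝ≥0} (hv : v ≠ 0) {x : ℝ}
    (h : (x - m')^2 ≤ (x - m)^2) : gaussianPDF m v x ≤ gaussianPDF m' v x := by
  have hv' : (0:ℝ) < 2 * v := by positivity
  unfold gaussianPDF gaussianPDFReal
  apply ENNReal.ofReal_le_ofReal
  apply mul_le_mul_of_nonneg_left _ (by positivity)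
  apply Real.exp_le_exp.2
  exact (div_le_div_iff_of_pos_right hv').2 (neg_le_neg h)

lemma gaussianReal_noAtoms {m : ℝ} {v : ℝ≥0} (hv : v ≠ 0) : NoAtoms (gaussianReal m v) :=
  ⟨fun x => (gaussianReal_absolutelyContinuous m hv) Real.volume_singleton⟩

lemma gaussianReal_smul_map (σ : ℝ≥0) (hσ : 0 < σ) :
    (gaussianReal 0 1).map (fun x => (σ:ℝ) * x) = gaussianReal 0 (σ ^ 2) := by
  have := gaussianReal_map_const_mul (μ := 0) (v := 1) (σ : ℝ)
  rw [mul_zero, mul_one] at this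
  convert this using 2
  ext; simp

lemma gaussianReal_one_symm (c : ℝ) :
    gaussianReal 0 1 (Set.Iio (-c)) = gaussianReal 0 1 (Set.Ici c) := by
  have hmap : (gaussianReal 0 1).map (fun x => (-1:ℝ) * x) = gaussianReal 0 1 := by
    have := gaussianReal_map_const_mul (μ := 0) (v := 1) (-1 : ℝ)
    rw [mul_zero] at this
    convert this using 2
    refine NNReal.coe_injective ?_
    norm_num
  haveI : NoAtoms (gaussianReal (0:ℝ) 1) := gaussianReal_noAtoms one_ne_zero
  have h2 : gaussianReal 0 1 (Set.Iio (-c)) = gaussianReal 0 1 (Set.Ioi c) := by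
    conv_lhs => rw [← hmap]
    rw [Measure.map_apply (by fun_prop) measurableSet_Iio]
    congr 1
    ext x
    simp only [Set.mem_preimage, Set.mem_Iio, Set.mem_Ioi]
    constructor <;> intro h <;> nlinarith
  rw [h2]
  exact measure_congr (Ioi_ae_eq_Ici' ((gaussianReal_absolutelyContinuous 0 one_ne_zero) Real.volume_singleton))

lemma gaussA (σ : ℝ≥0) (hσ : 0 < σ) (a : ℝ) :
    gaussianReal 0 (σ ^ 2) (Set.Ici (a/2)) = gaussianReal 0 1 (Set.Ici (a / (2 * (σ:ℝ)))) := by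
  have hσ' : (0:ℝ) < σ := hσ
  rw [← gaussianReal_smul_map σ hσ, Measure.map_apply (by fun_prop) measurableSet_Ici]
  congr 1
  ext x
  simp only [Set.mem_preimage, Set.mem_Ici]
  rw [div_le_iff₀ (by positivity : (0:ℝ) < 2), div_le_iff₀ (by positivity : (0:ℝ) < 2 * σ)]
  constructor <;> intro h <;> nlinarith

lemma gaussB (σ : ℝ≥0) (hσ : 0 < σ) (a : ℝ) :
    gaussianReal a (σ ^ 2) (Set.Iio (a/2)) = gaussianReal 0 1 (Set.Ici (a / (2 * (σ:ℝ)))) := by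
  have hσ' : (0:ℝ) < σ := hσ
  have hmap : (gaussianReal 0 1).map (fun x => (σ:ℝ) * x + a) = gaussianReal a (σ ^ 2) := by
    have h := gaussianReal_map_add_const (μ := 0) (v := σ^2) a
    rw [zero_add] at h
    rw [← h, ← gaussianReal_smul_map σ hσ, Measure.map_map (by fun_prop) (by fun_prop)]
    rfl
  rw [← hmap, Measure.map_apply (by fun_prop) measurableSet_Iio,
    ← gaussianReal_one_symm]
  congr 1
  ext x
  simp only [Set.mem_preimage, Set.mem_Iio]
  rw [show -(a / (2 * (σ:ℝ))) = (-a) / (2 * (σ:ℝ)) by ring,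
    lt_div_iff₀ (by positivity : (0:ℝ) < 2 * σ), lt_div_iff₀ (by positivity : (0:ℝ) < 2)]
  constructor <;> intro h <;> nlinarith

/-- For `γ = N(0,σ²)` and the translation `T_a : x ↦ x + a` with `a > 0`, the lattice infimum
of `γ` and `T_a#γ` has total mass `2·γ₁([a/(2σ), ∞))`; equivalently the total variation distance
between `N(0,σ²)` and `N(a,σ²)` equals `1 − 2·γ₁([a/(2σ), ∞))`. -/
theorem mass_of_inf_translate_gaussianReal
    (σ : ℝ≥0) (hσ : 0 < σ) (a : ℝ) (ha : 0 < a) :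
    (gaussianReal 0 (σ ^ 2) ⊓ (gaussianReal 0 (σ ^ 2)).map (fun x => x + a)) Set.univ
        = 2 * gaussianReal 0 1 (Set.Ici (a / (2 * (σ : ℝ))))
    ∧ (⨆ A : {s : Set ℝ // MeasurableSet s},
          |(gaussianReal 0 (σ ^ 2) A.1).toReal - (gaussianReal a (σ ^ 2) A.1).toReal|)
        = 1 - 2 * (gaussianReal 0 1 (Set.Ici (a / (2 * (σ : ℝ))))).toReal := by
  have hv : (σ^2 : ℝ≥0) ≠ 0 := pow_ne_zero 2 hσ.ne'
  set c := a / (2 * (σ:ℝ)) with hc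
  set μ := gaussianReal 0 (σ^2) with hμ
  set ν := gaussianReal a (σ^2) with hν
  set t := gaussianReal 0 1 (Set.Ici c) with htdef
  have hmapa : μ.map (fun x => x + a) = ν := by
    rw [hμ, hν]
    have := gaussianReal_map_add_const (μ := 0) (v := σ^2) a
    rwa [zero_add] at this
  have h1 : (μ ⊓ μ.map (fun x => x + a)) Set.univ = 2 * t := by
    rw [hmapa]
    rw [show μ = volume.withDensity (gaussianPDF 0 (σ^2)) from gaussianReal_of_var_ne_zero 0 hv,
      show ν = volume.withDensity (gaussianPDF a (σ^2)) from gaussianReal_of_var_ne_zero a hv,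
      inf_withDensity_apply' volume (measurable_gaussianPDF _ _) (measurable_gaussianPDF _ _)
        MeasurableSet.univ, Measure.restrict_univ,
      ← lintegral_add_compl _ (measurableSet_Iio (a := a/2)), Set.compl_Iio]
    have e1 : ∫⁻ x in Set.Iio (a/2), min (gaussianPDF 0 (σ^2) x) (gaussianPDF a (σ^2) x)
        = gaussianReal a (σ^2) (Set.Iio (a/2)) := by
      rw [gaussianReal_apply a hv]
      exact setLIntegral_congr_fun measurableSet_Iio (fun x hx =>
        min_eq_right (gaussianPDF_le_gaussianPDF hv
          (by have := Set.mem_Iio.mp hx; nlinarith)))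
    have e2 : ∫⁻ x in Set.Ici (a/2), min (gaussianPDF 0 (σ^2) x) (gaussianPDF a (σ^2) x)
        = gaussianReal 0 (σ^2) (Set.Ici (a/2)) := by
      rw [gaussianReal_apply 0 hv]
      exact setLIntegral_congr_fun measurableSet_Ici (fun x hx =>
        min_eq_left (gaussianPDF_le_gaussianPDF hv
          (by have := Set.mem_Ici.mp hx; nlinarith)))
    rw [e1, e2, gaussB σ hσ a, gaussA σ hσ a, ← htdef, two_mul]
  refine ⟨h1, ?_⟩
  -- total variation part
  have hminf : (μ ⊓ ν) Set.univ = 2 * t := by rw [← hmapa]; exact h1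
  have h2t : 2 * t ≤ 1 := by
    rw [← hminf]
    calc (μ ⊓ ν) Set.univ ≤ μ Set.univ := Measure.le_iff'.1 inf_le_left Set.univ
      _ = 1 := measure_univ
  have htne : t ≠ ∞ := measure_ne_top _ _
  have httoReal : t.toReal ≤ 1/2 := by
    have := ENNReal.toReal_mono (by norm_num) h2t
    rw [ENNReal.toReal_mul] at this
    norm_num at this
    linarith
  have hub : ∀ A : {s : Set ℝ // MeasurableSet s},
      |(μ A.1).toReal - (ν A.1).toReal| ≤ 1 - 2 * t.toReal := by
    rintro ⟨A, hA⟩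
    have key : ∀ (p q : Measure ℝ), IsProbabilityMeasure p → IsProbabilityMeasure q →
        p A + (p ⊓ q) Set.univ ≤ 1 + q A := by
      intro p q hp hq
      calc p A + (p ⊓ q) Set.univ = p A + ((p ⊓ q) A + (p ⊓ q) Aᶜ) := by
            rw [measure_add_measure_compl hA]
        _ ≤ p A + (q A + p Aᶜ) := by
            gcongr
            · exact inf_le_right
            · exact inf_le_left
        _ = (p A + p Aᶜ) + q A := by ring
        _ = 1 + q A := by rw [measure_add_measure_compl hA, measure_univ]
    have kmn := key μ ν inferInstance inferInstance
    have knm := key ν μ inferInstance inferInstance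
    rw [hminf] at kmn
    rw [inf_comm ν μ, hminf] at knm
    have r1 : (μ A).toReal + 2 * t.toReal ≤ 1 + (ν A).toReal := by
      have := ENNReal.toReal_mono (by finiteness) kmn
      rw [ENNReal.toReal_add (by finiteness) (by finiteness),
        ENNReal.toReal_add (by finiteness) (by finiteness), ENNReal.toReal_mul] at this
      norm_num at this ⊢
      linarith
    have r2 : (ν A).toReal + 2 * t.toReal ≤ 1 + (μ A).toReal := by
      have := ENNReal.toReal_mono (by finiteness) knm
      rw [ENNReal.toReal_add (by finiteness) (by finiteness),
        ENNReal.toReal_add (by finiteness) (by finiteness), ENNReal.toReal_mul] at this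
      norm_num at this ⊢
      linarith
    rw [abs_le]
    constructor <;> simp only <;> linarith
  have hA0 : |(μ (Set.Iio (a/2))).toReal - (ν (Set.Iio (a/2))).toReal| = 1 - 2 * t.toReal := by
    have hνA : ν (Set.Iio (a/2)) = t := gaussB σ hσ a
    have hμA : μ (Set.Iio (a/2)) = 1 - t := by
      rw [← Set.compl_Ici, prob_compl_eq_one_sub measurableSet_Ici, hμ, gaussA σ hσ a]
    rw [hνA, hμA, ENNReal.toReal_sub_of_le (le_trans (le_of_eq (by ring))
      (le_trans (by exact le_of_eq rfl) (prob_le_one))) (by finiteness)]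
    · rw [ENNReal.toReal_one, abs_of_nonneg (by linarith)]
      ring
  apply le_antisymm
  · exact ciSup_le hub
  · rw [show (1:ℝ) - 2 * t.toReal = |(μ (Set.Iio (a/2))).toReal - (ν (Set.Iio (a/2))).toReal|
      from hA0.symm]
    exact le_ciSup (f := fun A : {s : Set ℝ // MeasurableSet s} =>
      |(μ A.1).toReal - (ν A.1).toReal|)
      ⟨1 - 2 * t.toReal, by rintro y ⟨A, rfl⟩; exact hub A⟩ ⟨Set.Iio (a/2), measurableSet_Iio⟩
end
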